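/- arXiv:1211.0699 — 2 statements merged into one kernel-verified Lean document; each statement's English description precedes it below -/
import Mathlib

section
/- For every natural number n ≥ 1, E(f_n, f_{n+1}, f_{n+2}) = f_{n+2}·(f_{n+1}^2 + f_n^2 + f_{n−1}^2). -/
/-- Fibonacci numbers as integers. -/
noncomputable def f (n : ℕ) : ℤ := (Nat.fib n : ℤ)

/-- `E x y z = x^3 + y^3 + z^3 - 3xyz`. -/
def E (x y z : ℤ) : ℤ := x ^ 3 + y ^ 3 + z ^ 3 - 3 * x * y * z

theorem stmt3 (n : ℕ) (hn : 1 ≤ n) :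
    E (f n) (f (n + 1)) (f (n + 2)) =
      f (n + 2) * (f (n + 1) ^ 2 + f n ^ 2 + f (n - 1) ^ 2) := by
  obtain ⟨m, rfl⟩ := Nat.exists_eq_add_of_le hn
  simp only [E, f, Nat.add_sub_cancel_left]
  have h : ∀ k : ℕ, (Nat.fib (k + 2) : ℤ) = Nat.fib (k + 1) + Nat.fib k := by
    intro k; rw [Nat.fib_add_two]; push_cast; ring
  simp only [show 1 + m + 2 = m + 1 + 2 from by ring, show 1 + m + 1 = m + 2 from by ring,
    show 1 + m = m + 1 from by ring, h]
  ring
end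

section
/- For every natural number n ≥ 1, E(f_{n+3}, f_{n+4}, f_{n+5}) = (f_{n+2} + 2·f_{n+3})·(23·f_{n+1}^2 + 15·f_n^2 − 9·f_{n−1}^2). -/
theorem stmt4 (n : ℕ) (hn : 1 ≤ n) :
    E (f (n + 3)) (f (n + 4)) (f (n + 5)) =
      (f (n + 2) + 2 * f (n + 3)) *
        (23 * f (n + 1) ^ 2 + 15 * f n ^ 2 - 9 * f (n - 1) ^ 2) := by
  obtain ⟨m, rfl⟩ := Nat.exists_eq_add_of_le hn
  simp only [E, f]
  have h : ∀ k, Nat.fib (k + 2) = Nat.fib k + Nat.fib (k + 1) := fun k => Nat.fib_add_two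
  simp only [show ∀ k, 1 + m + k = m + (1 + k) from fun k => by ring, Nat.add_sub_cancel_left,
    show (1:ℕ) + m - 1 = m from by omega]
  push_cast [show m + 6 = (m+4)+2 from rfl, show m + 5 = (m+3)+2 from rfl,
    show m + 4 = (m+2)+2 from rfl, show m + 3 = (m+1)+2 from rfl,
    show m + 2 = m+2 from rfl, h, Nat.fib_add_two (n := m)]
  ring
end
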